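/- arXiv:2603.27827 — 4 statements merged into one kernel-verified Lean document; each statement's English description precedes it below -/
import Mathlib

section
/- If p_1, ..., p_m are distinct primes, a_1, ..., a_m are positive integers, and the sum of a_i/p_i equals 1, then for every index j, p_j divides a_j. -/
theorem egyptian_prime_sum_dvd
    (m : ℕ) (p a : Fin m → ℕ)
    (hp : ∀ i, (p i).Prime) (hpinj : Function.Injective p)
    (ha : ∀ i, 0 < a i)
    (hsum : (∑ i, (a i : ℚ) / (p i : ℚ)) = 1) :
    ∀ j, p j ∣ a j := by
  intro j
  have hp0 : ∀ i, (p i : ℚ) ≠ 0 := fun i => Nat.cast_ne_zero.mpr (hp i).pos.ne'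
  have key : (∑ i, a i * ∏ k ∈ Finset.univ.erase i, p k) = ∏ i, p i := by
    have h2 : ((∑ i, a i * ∏ k ∈ Finset.univ.erase i, p k : ℕ) : ℚ)
        = ((∏ i, p i : ℕ) : ℚ) := by
      push_cast
      calc (∑ i, (a i : ℚ) * ∏ k ∈ Finset.univ.erase i, (p k : ℚ))
          = ∑ i, ((a i : ℚ) / (p i : ℚ)) * ∏ k, (p k : ℚ) := by
            apply Finset.sum_congr rfl
            intro i _
            rw [← Finset.mul_prod_erase Finset.univ _ (Finset.mem_univ i)]
            rw [div_mul_eq_mul_div, mul_comm ((p i : ℚ)) _, ← mul_assoc,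
              mul_div_assoc, div_self (hp0 i), mul_one]
        _ = ∏ k, (p k : ℚ) := by rw [← Finset.sum_mul, hsum, one_mul]
    exact_mod_cast h2
  set S := ∑ i, a i * ∏ k ∈ Finset.univ.erase i, p k with hS
  have htot : p j ∣ S := key ▸ Finset.dvd_prod_of_mem p (Finset.mem_univ j)
  have hrest : p j ∣ ∑ i ∈ Finset.univ.erase j, a i * ∏ k ∈ Finset.univ.erase i, p k := by
    apply Finset.dvd_sum
    intro i hi
    have hij : i ≠ j := Finset.ne_of_mem_erase hi
    have : p j ∣ ∏ k ∈ Finset.univ.erase i, p k :=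
      Finset.dvd_prod_of_mem p (Finset.mem_erase.mpr ⟨fun h => hij h.symm, Finset.mem_univ j⟩)
    exact this.mul_left _
  have hsplit : S = a j * ∏ k ∈ Finset.univ.erase j, p k
      + ∑ i ∈ Finset.univ.erase j, a i * ∏ k ∈ Finset.univ.erase i, p k := by
    rw [hS, ← Finset.add_sum_erase Finset.univ _ (Finset.mem_univ j)]
  have hterm : p j ∣ a j * ∏ k ∈ Finset.univ.erase j, p k := by
    have := Nat.dvd_sub htot hrest
    rwa [hsplit, Nat.add_sub_cancel] at this
  rcases (Nat.Prime.dvd_mul (hp j)).mp hterm with h | h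
  · exact h
  · exfalso
    obtain ⟨k, hk, hdvd⟩ := (hp j).prime.exists_mem_finset_dvd h
    have : p j = p k := (Nat.prime_dvd_prime_iff_eq (hp j) (hp k)).mp hdvd
    exact Finset.ne_of_mem_erase hk (hpinj this.symm)
end

section
/- Suppose finitely many angles 2π/k_1, ..., 2π/k_s (with each k_i belonging to a fixed set S of integers ≥ 3) sum to 2π, where S consists of primes p_1 < ... < p_m together with doubled primes 2q_1, ..., 2q_k, all primes involved being distinct. Then either all k_i are equal to a single prime p (and s = p), or all k_i equal a single 2q (and s = 2q), or the multiset {k_1, ..., k_s} consists of exactly q_1 copies of 2q_1 and q_2 copies of 2q_2 for two of the doubled primes. -/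
open Finset in
theorem vertex_configuration_classification
    (m k s : ℕ) (p : Fin m → ℕ) (q : Fin k → ℕ)
    (hp : ∀ i, (p i).Prime) (hq : ∀ j, (q j).Prime)
    (hp3 : ∀ i, 3 ≤ p i) (hq3 : ∀ j, 3 ≤ 2 * q j)
    (hpinj : Function.Injective p) (hqinj : Function.Injective q)
    (hdisj : ∀ i j, p i ≠ q j)
    (ks : Fin s → ℕ)
    (hmem : ∀ i, (∃ j, ks i = p j) ∨ (∃ j, ks i = 2 * q j))
    (hsum : (∑ i, (2 * Real.pi) / (ks i : ℝ)) = 2 * Real.pi) :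
    (∃ j, (∀ i, ks i = p j) ∧ s = p j) ∨
    (∃ j, (∀ i, ks i = 2 * q j) ∧ s = 2 * q j) ∨
    (∃ j₁ j₂, j₁ ≠ j₂ ∧
      (∀ i, ks i = 2 * q j₁ ∨ ks i = 2 * q j₂) ∧
      (univ.filter (fun i => ks i = 2 * q j₁)).card = q j₁ ∧
      (univ.filter (fun i => ks i = 2 * q j₂)).card = q j₂) := by
  classical
  have hks3 : ∀ i, 3 ≤ ks i := by
    intro i
    rcases hmem i with ⟨j, h⟩ | ⟨j, h⟩
    · rw [h]; exact hp3 j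
    · rw [h]; exact hq3 j
  have hkspos : ∀ i, 0 < ks i := fun i => lt_of_lt_of_le (by norm_num) (hks3 i)
  set P := ∏ i, p i with hP
  set Q := ∏ j, q j with hQ
  set M := 2 * P * Q with hM
  have hPpos : 0 < P := Finset.prod_pos (fun i _ => (hp i).pos)
  have hQpos : 0 < Q := Finset.prod_pos (fun j _ => (hq j).pos)
  have hMpos : 0 < M := by positivity
  -- explicit quotients
  have hPj : ∀ j, P = p j * ∏ i ∈ univ.erase j, p i :=
    fun j => (Finset.mul_prod_erase univ p (mem_univ j)).symm
  have hQj : ∀ j, Q = q j * ∏ i ∈ univ.erase j, q i :=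
    fun j => (Finset.mul_prod_erase univ q (mem_univ j)).symm
  have hMp : ∀ j, M = p j * (2 * (∏ i ∈ univ.erase j, p i) * Q) := by
    intro j; rw [hM, hPj j]; ring
  have hMq : ∀ j, M = (2 * q j) * (P * ∏ i ∈ univ.erase j, q i) := by
    intro j; rw [hM, hQj j]; ring
  have hquotp : ∀ j, M / p j = 2 * (∏ i ∈ univ.erase j, p i) * Q := by
    intro j
    rw [hMp j, Nat.mul_div_cancel_left _ (hp j).pos]
  have hquotq : ∀ j, M / (2 * q j) = P * ∏ i ∈ univ.erase j, q i := by
    intro j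
    rw [hMq j, Nat.mul_div_cancel_left _ (by have := (hq j).pos; omega)]
  have hdvd : ∀ i, ks i ∣ M := by
    intro i
    rcases hmem i with ⟨j, h⟩ | ⟨j, h⟩
    · rw [h, hMp j]; exact Dvd.intro _ rfl
    · rw [h, hMq j]; exact Dvd.intro _ rfl
  -- the key natural-number equation
  have hne : ∀ i, ((ks i : ℝ)) ≠ 0 := fun i => Nat.cast_ne_zero.mpr (hkspos i).ne'
  have hsum1 : (∑ i, (1 : ℝ) / (ks i : ℝ)) = 1 := by
    have h2pi : (2 * Real.pi) ≠ 0 := by positivity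
    have : (2 * Real.pi) * (∑ i, (1 : ℝ) / (ks i : ℝ)) = (2 * Real.pi) * 1 := by
      rw [mul_one]
      conv_rhs => rw [← hsum]
      rw [Finset.mul_sum]
      exact Finset.sum_congr rfl fun i _ => by field_simp
    exact mul_left_cancel₀ h2pi this
  have key : ∑ i, M / ks i = M := by
    have : ((∑ i, M / ks i : ℕ) : ℝ) = ((M : ℕ) : ℝ) := by
      push_cast [Nat.cast_sum]
      rw [Finset.sum_congr rfl fun i _ => Nat.cast_div (hdvd i) (hne i)]
      have : ∑ i, (M : ℝ) / (ks i : ℝ) = (M : ℝ) * ∑ i, (1:ℝ) / (ks i : ℝ) := by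
        rw [Finset.mul_sum]
        exact Finset.sum_congr rfl fun i _ => by field_simp
      rw [this, hsum1, mul_one]
    exact_mod_cast this
  have divpos : ∀ i, 0 < M / ks i :=
    fun i => Nat.div_pos (Nat.le_of_dvd hMpos (hdvd i)) (hkspos i)
  -- splitting the sum at a value v
  have contrib : ∀ v : ℕ, ∑ i ∈ univ.filter (fun i => ks i = v), M / ks i
      = (univ.filter (fun i => ks i = v)).card * (M / v) := by
    intro v
    rw [Finset.sum_congr rfl (fun i hi => by rw [(Finset.mem_filter.mp hi).2]),
      Finset.sum_const, smul_eq_mul]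
  have split : ∀ v : ℕ, (univ.filter (fun i => ks i = v)).card * (M / v)
      + ∑ i ∈ univ.filter (fun i => ¬ ks i = v), M / ks i = M := by
    intro v
    rw [← contrib v, Finset.sum_filter_add_sum_filter_not, key]
  -- generic divisibility lemma
  have main : ∀ (v r : ℕ), r.Prime → r ∣ M → ¬ r ∣ M / v →
      (∀ i, ks i ≠ v → r ∣ M / ks i) →
      r ∣ (univ.filter (fun i => ks i = v)).card := by
    intro v r hr hrM hnd hrest
    have hrs : r ∣ ∑ i ∈ univ.filter (fun i => ¬ ks i = v), M / ks i :=
      Finset.dvd_sum fun i hi => hrest i (Finset.mem_filter.mp hi).2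
    have h1 : r ∣ (univ.filter (fun i => ks i = v)).card * (M / v) := by
      have := split v
      have h2 : (univ.filter (fun i => ks i = v)).card * (M / v)
          = M - ∑ i ∈ univ.filter (fun i => ¬ ks i = v), M / ks i := by omega
      rw [h2]; exact Nat.dvd_sub hrM hrs
    rcases (Nat.Prime.dvd_mul hr).mp h1 with h | h
    · exact h
    · exact absurd h hnd
  -- non-divisibility facts
  have ndp : ∀ j, ¬ p j ∣ M / p j := by
    intro j hdv
    rw [hquotp j] at hdv
    rcases (Nat.Prime.dvd_mul (hp j)).mp hdv with h | h
    · rcases (Nat.Prime.dvd_mul (hp j)).mp h with h | h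
      · have := Nat.le_of_dvd (by norm_num) h
        have := hp3 j; omega
      · obtain ⟨i, hi, hdvd'⟩ := ((hp j).prime.dvd_finset_prod_iff p).mp h
        have : p j = p i := (Nat.prime_dvd_prime_iff_eq (hp j) (hp i)).mp hdvd'
        exact (Finset.mem_erase.mp hi).1 (hpinj this.symm)
    · obtain ⟨i, _, hdvd'⟩ := ((hp j).prime.dvd_finset_prod_iff q).mp h
      exact hdisj j i ((Nat.prime_dvd_prime_iff_eq (hp j) (hq i)).mp hdvd')
  have ndq : ∀ j, ¬ q j ∣ M / (2 * q j) := by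
    intro j hdv
    rw [hquotq j] at hdv
    rcases (Nat.Prime.dvd_mul (hq j)).mp hdv with h | h
    · obtain ⟨i, _, hdvd'⟩ := ((hq j).prime.dvd_finset_prod_iff p).mp h
      exact hdisj i j ((Nat.prime_dvd_prime_iff_eq (hq j) (hp i)).mp hdvd').symm
    · obtain ⟨i, hi, hdvd'⟩ := ((hq j).prime.dvd_finset_prod_iff q).mp h
      have : q j = q i := (Nat.prime_dvd_prime_iff_eq (hq j) (hq i)).mp hdvd'
      exact (Finset.mem_erase.mp hi).1 (hqinj this.symm)
  -- positive divisibility facts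
  have dpq : ∀ j j', j ≠ j' → q j ∣ M / (2 * q j') := by
    intro j j' hne'
    rw [hquotq j']
    exact Dvd.dvd.mul_left
      (Finset.dvd_prod_of_mem q (Finset.mem_erase.mpr ⟨hne', mem_univ j⟩)) P
  have dpp : ∀ j j', j ≠ j' → p j ∣ M / p j' := by
    intro j j' hne'
    rw [hquotp j']
    exact Dvd.dvd.mul_right (Dvd.dvd.mul_left
      (Finset.dvd_prod_of_mem p (Finset.mem_erase.mpr ⟨hne', mem_univ j⟩)) 2) Q
  have dqp : ∀ j j', q j ∣ M / p j' := by
    intro j j'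
    rw [hquotp j']
    exact Dvd.dvd.mul_left (Finset.dvd_prod_of_mem q (mem_univ j)) _
  have dpq2 : ∀ j j', p j ∣ M / (2 * q j') := by
    intro j j'
    rw [hquotq j']
    exact Dvd.dvd.mul_right (Finset.dvd_prod_of_mem p (mem_univ j)) _
  -- fullness: if the contribution of value v is all of M, every ks i = v
  have fullcase : ∀ v : ℕ, (univ.filter (fun i => ks i = v)).card * (M / v) = M →
      (∀ i, ks i = v) ∧ (univ.filter (fun i => ks i = v)).card = s := by
    intro v hfull
    have hrest0 : ∑ i ∈ univ.filter (fun i => ¬ ks i = v), M / ks i = 0 := by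
      have := split v; omega
    have hall : ∀ i, ks i = v := by
      intro i
      by_contra hne'
      have hi : i ∈ univ.filter (fun i => ¬ ks i = v) :=
        Finset.mem_filter.mpr ⟨mem_univ i, hne'⟩
      have := Finset.sum_eq_zero_iff.mp hrest0 i hi
      exact absurd this (divpos i).ne'
    refine ⟨hall, ?_⟩
    rw [Finset.filter_true_of_mem (fun i _ => hall i), Finset.card_univ, Fintype.card_fin]
  by_cases hcase : ∃ i j, ks i = p j
  · -- case 1 : some prime value is used
    obtain ⟨i0, j, hij⟩ := hcase
    left
    refine ⟨j, ?_⟩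
    set c := (univ.filter (fun i => ks i = p j)).card with hc
    have hcd : p j ∣ c := by
      refine main (p j) (p j) (hp j) ⟨_, hMp j⟩ (ndp j) ?_
      intro i hi
      rcases hmem i with ⟨j', h⟩ | ⟨j', h⟩
      · rw [h]; exact dpp j j' (fun hjj => hi (h.trans (congrArg p hjj.symm)))
      · rw [h]; exact dpq2 j j'
    have hcpos : 0 < c := Finset.card_pos.mpr ⟨i0, Finset.mem_filter.mpr ⟨mem_univ i0, hij⟩⟩
    have hble : c * (M / p j) ≤ M := by
      have h := split (p j); rw [← hc] at h; omega
    have hXpos : 0 < M / p j := Nat.div_pos (Nat.le_of_dvd hMpos ⟨_, hMp j⟩) (hp j).pos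
    have hcle : c ≤ p j := by
      by_contra hlt
      push_neg at hlt
      have : p j * (M / p j) < c * (M / p j) := (Nat.mul_lt_mul_right hXpos).mpr hlt
      rw [Nat.mul_div_cancel' ⟨_, hMp j⟩] at this
      omega
    have hceq : c = p j := le_antisymm hcle (Nat.le_of_dvd hcpos hcd)
    have hfull : c * (M / p j) = M := by
      rw [hceq, Nat.mul_div_cancel' ⟨_, hMp j⟩]
    obtain ⟨hall, hcard⟩ := fullcase (p j) hfull
    exact ⟨hall, by rw [← hcard, ← hc, hceq]⟩
  · push_neg at hcase
    have hmem' : ∀ i, ∃ j, ks i = 2 * q j := by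
      intro i
      rcases hmem i with ⟨j, h⟩ | h
      · exact absurd h (hcase i j)
      · exact h
    have hspos : 0 < s := by
      by_contra hs
      push_neg at hs
      interval_cases s
      simp at key
      omega
    obtain ⟨j₁, hij1⟩ := hmem' ⟨0, hspos⟩
    -- generic facts for a used doubled prime value
    have qfact : ∀ (j : Fin k) (i0 : Fin s), ks i0 = 2 * q j →
        q j ∣ (univ.filter (fun i => ks i = 2 * q j)).card ∧
        0 < (univ.filter (fun i => ks i = 2 * q j)).card ∧
        (univ.filter (fun i => ks i = 2 * q j)).card ≤ 2 * q j := by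
      intro j i0 hi0
      have hdd : q j ∣ (univ.filter (fun i => ks i = 2 * q j)).card := by
        refine main (2 * q j) (q j) (hq j) ⟨2 * (P * ∏ i ∈ univ.erase j, q i), by
          rw [hMq j]; ring⟩ (ndq j) ?_
        intro i hi
        rcases hmem' i with ⟨j', h⟩
        rw [h]
        exact dpq j j' (fun hjj => hi (by rw [h, hjj]))
      have hcpos : 0 < (univ.filter (fun i => ks i = 2 * q j)).card :=
        Finset.card_pos.mpr ⟨i0, Finset.mem_filter.mpr ⟨mem_univ i0, hi0⟩⟩
      have hXpos : 0 < M / (2 * q j) :=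
        Nat.div_pos (Nat.le_of_dvd hMpos ⟨_, hMq j⟩) (by have := (hq j).pos; omega)
      have hble : (univ.filter (fun i => ks i = 2 * q j)).card * (M / (2 * q j)) ≤ M := by
        have := split (2 * q j); omega
      refine ⟨hdd, hcpos, ?_⟩
      by_contra hlt
      push_neg at hlt
      have : (2 * q j) * (M / (2 * q j)) < (univ.filter (fun i => ks i = 2 * q j)).card * (M / (2 * q j)) :=
        (Nat.mul_lt_mul_right hXpos).mpr hlt
      rw [Nat.mul_div_cancel' ⟨_, hMq j⟩] at this
      omega
    obtain ⟨hd1, hd1pos, hd1le⟩ := qfact j₁ _ hij1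
    set d₁ := (univ.filter (fun i => ks i = 2 * q j₁)).card with hd₁
    obtain ⟨t, ht⟩ := hd1
    have hqpos := (hq j₁).pos
    have ht2 : t = 1 ∨ t = 2 := by
      have h1 : 1 ≤ t := by
        by_contra h
        push_neg at h
        interval_cases t
        simp at ht
        omega
      have h2 : t ≤ 2 := by
        by_contra h
        push_neg at h
        have h3 : 3 * q j₁ ≤ q j₁ * t := by nlinarith
        omega
      omega
    rcases ht2 with ht1 | ht1
    · -- d₁ = q j₁ : we are in case 3
      have hd1eq : d₁ = q j₁ := by rw [ht, ht1, mul_one]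
      right; right
      set X₁ := M / (2 * q j₁) with hX₁
      have hMX1 : M = 2 * (q j₁ * X₁) := by
        have h := (Nat.mul_div_cancel' (⟨_, hMq j₁⟩ : 2 * q j₁ ∣ M)).symm
        rw [show 2 * q j₁ * (M / (2 * q j₁)) = 2 * (q j₁ * (M / (2 * q j₁))) from by ring] at h
        exact h
      have hX1pos : 0 < X₁ :=
        Nat.div_pos (Nat.le_of_dvd hMpos ⟨_, hMq j₁⟩) (by omega)
      have hrest1 : ∑ i ∈ univ.filter (fun i => ¬ ks i = 2 * q j₁), M / ks i = q j₁ * X₁ := by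
        have h := split (2 * q j₁)
        rw [← hd₁, ← hX₁, hd1eq] at h
        omega
      have hrest1pos : 0 < ∑ i ∈ univ.filter (fun i => ¬ ks i = 2 * q j₁), M / ks i := by
        rw [hrest1]; positivity
      obtain ⟨i1, hi1mem⟩ := Finset.nonempty_of_sum_ne_zero hrest1pos.ne'
      have hi1ne : ks i1 ≠ 2 * q j₁ := (Finset.mem_filter.mp hi1mem).2
      obtain ⟨j₂, hij2⟩ := hmem' i1
      have hj12 : j₁ ≠ j₂ := by
        intro hjj; exact hi1ne (by rw [hij2, hjj])
      obtain ⟨hd2, hd2pos, _⟩ := qfact j₂ _ hij2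
      set d₂ := (univ.filter (fun i => ks i = 2 * q j₂)).card with hd₂
      set X₂ := M / (2 * q j₂) with hX₂
      have hMX2 : M = 2 * (q j₂ * X₂) := by
        have h := (Nat.mul_div_cancel' (⟨_, hMq j₂⟩ : 2 * q j₂ ∣ M)).symm
        rw [show 2 * q j₂ * (M / (2 * q j₂)) = 2 * (q j₂ * (M / (2 * q j₂))) from by ring] at h
        exact h
      have hX2pos : 0 < X₂ :=
        Nat.div_pos (Nat.le_of_dvd hMpos ⟨_, hMq j₂⟩) (by have := (hq j₂).pos; omega)
      -- the value-(2q j₁) part is inside the rest of the split at 2q j₂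
      have hsub : univ.filter (fun i => ks i = 2 * q j₁)
          ⊆ univ.filter (fun i => ¬ ks i = 2 * q j₂) := by
        intro i hi
        have h := (Finset.mem_filter.mp hi).2
        refine Finset.mem_filter.mpr ⟨mem_univ i, ?_⟩
        rw [h]
        intro hcontra
        have : q j₁ = q j₂ := by omega
        exact hj12 (hqinj this)
      have hge : q j₁ * X₁ ≤ ∑ i ∈ univ.filter (fun i => ¬ ks i = 2 * q j₂), M / ks i := by
        calc q j₁ * X₁ = d₁ * (M / (2 * q j₁)) := by rw [hd1eq]
          _ = ∑ i ∈ univ.filter (fun i => ks i = 2 * q j₁), M / ks i := (contrib _).symm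
          _ ≤ _ := Finset.sum_le_sum_of_subset hsub
      have hd2le : d₂ * X₂ ≤ q j₁ * X₁ := by
        have h := split (2 * q j₂)
        rw [← hd₂, ← hX₂] at h
        omega
      have hhalf : q j₂ * X₂ = q j₁ * X₁ := by omega
      have hd2le' : d₂ ≤ q j₂ := by
        by_contra hlt
        push_neg at hlt
        have : q j₂ * X₂ < d₂ * X₂ := (Nat.mul_lt_mul_right hX2pos).mpr hlt
        omega
      have hd2eq : d₂ = q j₂ := le_antisymm hd2le' (Nat.le_of_dvd hd2pos hd2)
      -- now show every ks i is one of the two values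
      refine ⟨j₁, j₂, hj12, ?_, hd1eq, hd2eq⟩
      intro i
      by_contra hno
      push_neg at hno
      obtain ⟨hno1, hno2⟩ := hno
      -- rest-of-split at 2q j₂ equals q j₁ X₁ and the j₁ part already fills it
      have hrest2 : ∑ i ∈ univ.filter (fun i => ¬ ks i = 2 * q j₂), M / ks i = q j₁ * X₁ := by
        have h := split (2 * q j₂)
        rw [← hd₂, ← hX₂, hd2eq] at h
        omega
      have hsplit2 : ∑ i ∈ (univ.filter (fun i => ¬ ks i = 2 * q j₂)).filter
            (fun i => ks i = 2 * q j₁), M / ks i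
          + ∑ i ∈ (univ.filter (fun i => ¬ ks i = 2 * q j₂)).filter
            (fun i => ¬ ks i = 2 * q j₁), M / ks i
          = q j₁ * X₁ := by
        rw [Finset.sum_filter_add_sum_filter_not, hrest2]
      have hfeq : (univ.filter (fun i => ¬ ks i = 2 * q j₂)).filter
            (fun i => ks i = 2 * q j₁) = univ.filter (fun i => ks i = 2 * q j₁) := by
        apply Finset.ext
        intro i
        simp only [Finset.mem_filter, mem_univ, true_and]
        constructor
        · rintro ⟨_, h⟩; exact h
        · intro h
          refine ⟨?_, h⟩
          rw [h]
          intro hcontra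
          exact hj12 (hqinj (by omega))
      have hpart1 : ∑ i ∈ (univ.filter (fun i => ¬ ks i = 2 * q j₂)).filter
            (fun i => ks i = 2 * q j₁), M / ks i = q j₁ * X₁ := by
        rw [hfeq, contrib, ← hd₁, hd1eq, ← hX₁]
      have hzero : ∑ i ∈ (univ.filter (fun i => ¬ ks i = 2 * q j₂)).filter
            (fun i => ¬ ks i = 2 * q j₁), M / ks i = 0 := by omega
      have hi : i ∈ (univ.filter (fun i => ¬ ks i = 2 * q j₂)).filter
          (fun i => ¬ ks i = 2 * q j₁) := by
        refine Finset.mem_filter.mpr ⟨Finset.mem_filter.mpr ⟨mem_univ i, hno2⟩, hno1⟩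
      have := Finset.sum_eq_zero_iff.mp hzero i hi
      exact absurd this (divpos i).ne'
    · -- d₁ = 2 q j₁ : case 2
      have hd1eq : d₁ = 2 * q j₁ := by rw [ht, ht1]; ring
      right; left
      refine ⟨j₁, ?_⟩
      have hfull : d₁ * (M / (2 * q j₁)) = M := by
        rw [hd1eq, Nat.mul_div_cancel' ⟨_, hMq j₁⟩]
      obtain ⟨hall, hcard⟩ := fullcase (2 * q j₁) hfull
      exact ⟨hall, by rw [← hcard, ← hd₁, hd1eq]⟩
end

section
/- Suppose x_1, ..., x_s are elements of {1/p : p prime, p > 3} ∪ {1/(2q) : q prime} where all primes appearing are distinct, with repetitions allowed, and Σ x_i = 1. If some x_i = 1/p for a prime p (not of the form 1/(2q)), then all x_j equal 1/p and s = p. -/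
theorem vertex_sum_forces_single_prime
    (mm kk s : ℕ) (p : Fin mm → ℕ) (q : Fin kk → ℕ)
    (hp : ∀ i, (p i).Prime) (hp3 : ∀ i, 3 < p i)
    (hq : ∀ j, (q j).Prime)
    (hpinj : Function.Injective p) (hqinj : Function.Injective q)
    (hdisj : ∀ i j, p i ≠ q j)
    (x : Fin s → ℚ)
    (hx : ∀ i, (∃ j, x i = 1 / (p j : ℚ)) ∨ (∃ j, x i = 1 / (2 * (q j : ℚ))))
    (hsum : (∑ i, x i) = 1)
    (hsome : ∃ i j, x i = 1 / (p j : ℚ)) :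
    ∃ j, (∀ i, x i = 1 / (p j : ℚ)) ∧ s = p j := by
  classical
  obtain ⟨i0, j0, hi0⟩ := hsome
  set P : ℕ := p j0 with hPdef
  have hPprime := hp j0
  have hPpos : 0 < P := hPprime.pos
  -- choose denominators
  have hd : ∀ i, ∃ d : ℕ, x i = 1 / (d : ℚ) ∧ ((∃ j, d = p j) ∨ (∃ j, d = 2 * q j)) := by
    intro i
    rcases hx i with ⟨j, hj⟩ | ⟨j, hj⟩
    · exact ⟨p j, hj, Or.inl ⟨j, rfl⟩⟩
    · refine ⟨2 * q j, ?_, Or.inr ⟨j, rfl⟩⟩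
      rw [hj]; push_cast; ring
  choose d hd1 hd2 using hd
  have hdpos : ∀ i, 0 < d i := by
    intro i
    rcases hd2 i with ⟨j, hj⟩ | ⟨j, hj⟩
    · rw [hj]; exact (hp j).pos
    · rw [hj]; exact Nat.mul_pos (by norm_num) (hq j).pos
  set M : ℕ := (∏ j, p j) * ∏ j, (2 * q j) with hMdef
  set K : ℕ := (∏ j ∈ Finset.univ.erase j0, p j) * ∏ j, (2 * q j) with hKdef
  have hMK : M = P * K := by
    rw [hMdef, hKdef, ← Finset.mul_prod_erase Finset.univ p (Finset.mem_univ j0), mul_assoc]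
  have hKpos : 0 < K :=
    Nat.mul_pos (Finset.prod_pos fun j _ => (hp j).pos)
      (Finset.prod_pos fun j _ => Nat.mul_pos (by norm_num) (hq j).pos)
  have hMpos : 0 < M := hMK ▸ Nat.mul_pos hPpos hKpos
  have hdM : ∀ i, d i ∣ M := by
    intro i
    rcases hd2 i with ⟨j, hj⟩ | ⟨j, hj⟩
    · rw [hj]; exact (Finset.dvd_prod_of_mem p (Finset.mem_univ j)).mul_right _
    · rw [hj]; exact (Finset.dvd_prod_of_mem _ (Finset.mem_univ j)).mul_left _
  have hPK : ¬ P ∣ K := by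
    intro hdvd
    rcases (Nat.Prime.dvd_mul hPprime).mp hdvd with h | h
    · obtain ⟨j, hjmem, hjdvd⟩ := hPprime.prime.exists_mem_finset_dvd h
      have : P = p j := ((Nat.prime_dvd_prime_iff_eq hPprime (hp j)).mp hjdvd)
      have : j0 = j := hpinj this
      exact (Finset.mem_erase.mp hjmem).1 this.symm
    · obtain ⟨j, _, hjdvd⟩ := hPprime.prime.exists_mem_finset_dvd h
      rcases (Nat.Prime.dvd_mul hPprime).mp hjdvd with h2 | h2
      · have h3 := hp3 j0
        have : P = 2 := (Nat.prime_dvd_prime_iff_eq hPprime Nat.prime_two).mp h2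
        omega
      · exact hdisj j0 j ((Nat.prime_dvd_prime_iff_eq hPprime (hq j)).mp h2)
  -- integer values c i = M / d i
  set c : Fin s → ℕ := fun i => M / d i with hcdef
  have hcd : ∀ i, c i * d i = M := fun i => Nat.div_mul_cancel (hdM i)
  have hcQ : ∀ i, (c i : ℚ) = (M : ℚ) * x i := by
    intro i
    have hdne : ((d i : ℚ)) ≠ 0 := Nat.cast_ne_zero.mpr (hdpos i).ne'
    rw [hd1 i]
    field_simp
    exact_mod_cast hcd i
  have hsumc : ∑ i, c i = M := by
    have : ((∑ i, c i : ℕ) : ℚ) = (M : ℚ) := by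
      push_cast
      rw [Finset.sum_congr rfl (fun i _ => hcQ i), ← Finset.mul_sum, hsum, mul_one]
    exact_mod_cast this
  -- the set of indices with x i = 1/P
  set S : Finset (Fin s) := Finset.univ.filter (fun i => x i = 1 / (P : ℚ)) with hSdef
  have hi0S : i0 ∈ S := Finset.mem_filter.mpr ⟨Finset.mem_univ _, hi0⟩
  have hdS : ∀ i ∈ S, d i = P := by
    intro i hi
    have hxi := (Finset.mem_filter.mp hi).2
    have : (1 : ℚ) / (d i : ℚ) = 1 / (P : ℚ) := by rw [← hd1 i, hxi]
    rw [one_div, one_div, inv_inj] at this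
    exact_mod_cast this
  have hcS : ∀ i ∈ S, c i = K := by
    intro i hi
    have h1 : c i * d i = K * P := by rw [hcd i, hMK, mul_comm]
    rw [hdS i hi] at h1
    exact Nat.eq_of_mul_eq_mul_right hPpos h1
  have hPc : ∀ i ∉ S, P ∣ c i := by
    intro i hi
    have hdne : d i ≠ P := by
      intro h
      apply hi
      refine Finset.mem_filter.mpr ⟨Finset.mem_univ _, ?_⟩
      rw [hd1 i, h]
    have hcop : Nat.Coprime P (d i) := by
      rw [Nat.Prime.coprime_iff_not_dvd hPprime]
      intro hdvd
      rcases hd2 i with ⟨j, hj⟩ | ⟨j, hj⟩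
      · rw [hj] at hdvd
        exact hdne (by rw [hj, ← (Nat.prime_dvd_prime_iff_eq hPprime (hp j)).mp hdvd])
      · rw [hj] at hdvd
        rcases (Nat.Prime.dvd_mul hPprime).mp hdvd with h2 | h2
        · have h3 := hp3 j0
          have : P = 2 := (Nat.prime_dvd_prime_iff_eq hPprime Nat.prime_two).mp h2
          omega
        · exact hdisj j0 j ((Nat.prime_dvd_prime_iff_eq hPprime (hq j)).mp h2)
    have : P ∣ c i * d i := by rw [hcd i, hMK]; exact Dvd.intro K rfl
    exact hcop.dvd_of_dvd_mul_right this
  -- split the sum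
  have hsplit : S.card * K + ∑ i ∈ Sᶜ, c i = P * K := by
    have h1 : ∑ i ∈ S, c i = S.card * K := by
      rw [Finset.sum_congr rfl hcS, Finset.sum_const, smul_eq_mul]
    calc S.card * K + ∑ i ∈ Sᶜ, c i = ∑ i ∈ S, c i + ∑ i ∈ Sᶜ, c i := by rw [h1]
      _ = ∑ i, c i := (Finset.sum_add_sum_compl S c)
      _ = M := hsumc
      _ = P * K := hMK
  have hPt : P ∣ ∑ i ∈ Sᶜ, c i := Finset.dvd_sum (fun i hi => hPc i (Finset.mem_compl.mp hi))
  have hPaK : P ∣ S.card * K := by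
    have h1 : P ∣ S.card * K + ∑ i ∈ Sᶜ, c i := hsplit ▸ Dvd.intro K rfl
    exact (Nat.dvd_add_right hPt).mp (by rwa [add_comm] at h1)
  have hPa : P ∣ S.card := by
    rcases (Nat.Prime.dvd_mul hPprime).mp hPaK with h | h
    · exact h
    · exact absurd h hPK
  have haP : S.card = P := by
    have hle : S.card ≤ P := by
      by_contra hlt
      push_neg at hlt
      have : P * K < S.card * K := (Nat.mul_lt_mul_right hKpos).mpr hlt
      omega
    have h1 : 1 ≤ S.card := Finset.card_pos.mpr ⟨i0, hi0S⟩
    exact Nat.le_antisymm hle (Nat.le_of_dvd (by omega) hPa)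
  have ht0 : ∑ i ∈ Sᶜ, c i = 0 := by
    rw [haP] at hsplit; omega
  have hcompl : Sᶜ = ∅ := by
    by_contra hne
    obtain ⟨i, hi⟩ := Finset.nonempty_iff_ne_empty.mpr hne
    have hci : c i = 0 := by
      have := Finset.sum_eq_zero_iff.mp ht0 i hi
      exact this
    have := hcd i
    rw [hci, zero_mul] at this
    omega
  have hSuniv : S = Finset.univ := by
    rwa [← Finset.compl_eq_empty_iff]
  refine ⟨j0, ?_, ?_⟩
  · intro i
    have : i ∈ S := hSuniv ▸ Finset.mem_univ i
    exact (Finset.mem_filter.mp this).2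
  · rw [hSuniv, Finset.card_univ, Fintype.card_fin] at haP
    exact haP
end

section
/- For any prime p ≥ 5 and distinct primes q_1, q_2 different from p, there is no solution in positive integers a, b to a/p + b/(2q_1) = 1 and no solution in positive integers a, b, c to a/p + b/(2q_1) + c/(2q_2) = 1. -/
theorem no_mixed_odd_prime_solution
    (p q₁ q₂ : ℕ) (hp : p.Prime) (hp5 : 5 ≤ p)
    (hq₁ : q₁.Prime) (hq₂ : q₂.Prime)
    (hq₁p : q₁ ≠ p) (hq₂p : q₂ ≠ p) (hq₁₂ : q₁ ≠ q₂) :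
    (¬ ∃ a b : ℕ, 0 < a ∧ 0 < b ∧
        (a : ℚ) / p + (b : ℚ) / (2 * q₁) = 1) ∧
    (¬ ∃ a b c : ℕ, 0 < a ∧ 0 < b ∧ 0 < c ∧
        (a : ℚ) / p + (b : ℚ) / (2 * q₁) + (c : ℚ) / (2 * q₂) = 1) := by
  have hp0 : (p : ℚ) ≠ 0 := Nat.cast_ne_zero.mpr hp.pos.ne'
  have hq10 : (q₁ : ℚ) ≠ 0 := Nat.cast_ne_zero.mpr hq₁.pos.ne'
  have hq20 : (q₂ : ℚ) ≠ 0 := Nat.cast_ne_zero.mpr hq₂.pos.ne'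
  have hpq1 : ¬ p ∣ q₁ := fun h => hq₁p ((Nat.prime_dvd_prime_iff_eq hp hq₁).mp h).symm
  have hp2 : ¬ p ∣ 2 := fun h => by have := Nat.le_of_dvd (by norm_num) h; omega
  constructor
  · rintro ⟨a, b, ha, hb, heq⟩
    have key : 2 * q₁ * a + p * b = 2 * p * q₁ := by
      have : (2 * q₁ * a + p * b : ℚ) = 2 * p * q₁ := by
        field_simp at heq
        push_cast
        linarith
      exact_mod_cast this
    have h1 : p ∣ 2 * q₁ * a := by
      have h2 : p ∣ 2 * q₁ * a + p * b := key ▸ Dvd.intro (2 * q₁) (by ring)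
      exact (Nat.dvd_add_iff_left (Dvd.intro b rfl)).mpr h2
    have h3 : p ∣ a := by
      rcases (Nat.Prime.dvd_mul hp).mp h1 with h | h
      · rcases (Nat.Prime.dvd_mul hp).mp h with h | h
        · exact absurd h hp2
        · exact absurd h hpq1
      · exact h
    have hap : p ≤ a := Nat.le_of_dvd ha h3
    nlinarith [hq₁.pos, hp.pos]
  · rintro ⟨a, b, c, ha, hb, hc, heq⟩
    have hpq2 : ¬ p ∣ q₂ := fun h => hq₂p ((Nat.prime_dvd_prime_iff_eq hp hq₂).mp h).symm
    have key : 2 * q₁ * q₂ * a + p * q₂ * b + p * q₁ * c = 2 * p * q₁ * q₂ := by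
      have : (2 * q₁ * q₂ * a + p * q₂ * b + p * q₁ * c : ℚ) = 2 * p * q₁ * q₂ := by
        field_simp at heq
        push_cast
        linarith
      exact_mod_cast this
    have h1 : p ∣ 2 * q₁ * q₂ * a := by
      have h2 : p ∣ 2 * q₁ * q₂ * a + (p * q₂ * b + p * q₁ * c) := by
        rw [← add_assoc, key]; exact Dvd.intro (2 * q₁ * q₂) (by ring)
      exact (Nat.dvd_add_iff_left ⟨q₂ * b + q₁ * c, by ring⟩).mpr h2
    have h3 : p ∣ a := by
      rcases (Nat.Prime.dvd_mul hp).mp h1 with h | h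
      · rcases (Nat.Prime.dvd_mul hp).mp h with h | h
        · rcases (Nat.Prime.dvd_mul hp).mp h with h | h
          · exact absurd h hp2
          · exact absurd h hpq1
        · exact absurd h hpq2
      · exact h
    have hap : p ≤ a := Nat.le_of_dvd ha h3
    have h4 : 2 * q₁ * q₂ * p ≤ 2 * q₁ * q₂ * a := Nat.mul_le_mul_left _ hap
    have h5 : 0 < p * q₂ * b := Nat.mul_pos (Nat.mul_pos hp.pos hq₂.pos) hb
    have h6 : 2 * p * q₁ * q₂ = 2 * q₁ * q₂ * p := by ring
    omega
end
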